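/- Let T be a tree on vertex set V with |V| = n ≥ 2, and let A_1,...,A_{n−1} be spanning arborescences on V each of which is an orientation of T (i.e., the underlying undirected graph of each A_i equals T). Let G be their disjoint union. Then G contains a rainbow spanning arborescence, i.e., a spanning arborescence using exactly one arc from each A_i. -/

import Mathlib

open Finset

variable {V : Type*}

/-- `A` is the arc set of an arborescence on vertex set `U` rooted at `r`:
all arcs lie within `U`, the root has no incoming arc, every other vertex of `U`
has exactly one incoming arc, and every vertex of `U` is reachable from `r`. -/
def IsArborOn [DecidableEq V] (U : Finset V) (A : Finset (V × V)) (r : V) : Prop :=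
  r ∈ U ∧ (∀ e ∈ A, e.1 ∈ U ∧ e.2 ∈ U) ∧ (∀ e ∈ A, e.2 ≠ r) ∧
  (∀ v ∈ U, v ≠ r → (A.filter (fun e => e.2 = v)).card = 1) ∧
  (∀ v ∈ U, Relation.ReflTransGen (fun a b => (a, b) ∈ A) r v)

/-- A spanning arborescence on the whole (finite) vertex type. -/
def IsSpanningArbor [Fintype V] [DecidableEq V] (A : Finset (V × V)) (r : V) : Prop :=
  IsArborOn Finset.univ A r

/-- `B` is rainbow w.r.t. the colored arc sets `A 0, …, A (k-1)`:
each arc of `B` can be assigned a color whose class contains it, with all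
assigned colors distinct (i.e. at most one arc from each color). -/
def IsRainbowOf {k : ℕ} (A : Fin k → Finset (V × V)) (B : Finset (V × V)) : Prop :=
  ∃ c : V × V → Fin k, Set.InjOn c ↑B ∧ ∀ e ∈ B, e ∈ A (c e)

section AuxLemmas
variable [DecidableEq V] {U : Finset V} {A : Finset (V × V)} {r : V}

lemma arbor_in_unique (hA : IsArborOn U A r) {w : V} (hw : w ∈ U) (hwr : w ≠ r)
    {e e' : V × V} (he : e ∈ A) (he2 : e.2 = w) (he' : e' ∈ A) (he2' : e'.2 = w) : e = e' := by
  obtain ⟨x, hx⟩ := Finset.card_eq_one.mp (hA.2.2.2.1 w hw hwr)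
  have h1 : e ∈ ({x} : Finset (V × V)) := hx ▸ (Finset.mem_filter.mpr ⟨he, he2⟩)
  have h2 : e' ∈ ({x} : Finset (V × V)) := hx ▸ (Finset.mem_filter.mpr ⟨he', he2'⟩)
  simp only [Finset.mem_singleton] at h1 h2
  rw [h1, h2]

lemma arbor_not_both (hA : IsArborOn U A r) {a b : V}
    (hab : (a, b) ∈ A) (hba : (b, a) ∈ A) : False := by
  have hbr : b ≠ r := hA.2.2.1 _ hab
  have har : a ≠ r := hA.2.2.1 _ hba
  have haU : a ∈ U := (hA.2.1 _ hab).1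
  have hbU : b ∈ U := (hA.2.1 _ hab).2
  have key : ∀ w, Relation.ReflTransGen (fun x y => (x, y) ∈ A) r w → w ≠ a ∧ w ≠ b := by
    intro w hw
    induction hw with
    | refl => exact ⟨Ne.symm har, Ne.symm hbr⟩
    | @tail x y hxy harc ih =>
      constructor
      · rintro rfl
        have := arbor_in_unique hA haU har harc rfl hba rfl
        exact ih.2 (congrArg Prod.fst this)
      · rintro rfl
        have := arbor_in_unique hA hbU hbr harc rfl hab rfl
        exact ih.1 (congrArg Prod.fst this)
  exact (key a (hA.2.2.2.2 a haU)).1 rfl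

lemma arbor_card (hA : IsArborOn U A r) : A.card + 1 = U.card := by
  have h : A.card = ∑ w ∈ U, (A.filter (fun e => e.2 = w)).card :=
    Finset.card_eq_sum_card_fiberwise (fun e he => (hA.2.1 e he).2)
  rw [← Finset.add_sum_erase _ _ hA.1] at h
  have hr0 : (A.filter (fun e => e.2 = r)).card = 0 := by
    rw [Finset.card_eq_zero, Finset.filter_eq_empty_iff]
    exact fun {e} he => hA.2.2.1 e he
  have hsum : ∑ w ∈ U.erase r, (A.filter (fun e => e.2 = w)).card = (U.erase r).card := by
    rw [Finset.card_eq_sum_ones]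
    exact Finset.sum_congr rfl (fun w hw =>
      hA.2.2.2.1 w (Finset.mem_of_mem_erase hw) (Finset.ne_of_mem_erase hw))
  rw [hr0, hsum, Finset.card_erase_of_mem hA.1] at h
  have hpos : 1 ≤ U.card := Finset.card_pos.mpr ⟨r, hA.1⟩
  omega

lemma arbor_leaf (hA : IsArborOn U A r) (hU : 2 ≤ U.card) :
    ∃ v ∈ U, v ≠ r ∧ ∀ e ∈ A, e.1 ≠ v := by
  by_contra h
  push_neg at h
  have hall : ∀ v ∈ U, ∃ e ∈ A, e.1 = v := by
    intro w hw
    by_cases hwr : w = r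
    · subst hwr
      obtain ⟨b, hbU, hbr⟩ := Finset.exists_mem_ne (s := U) (by omega) w
      rcases Relation.ReflTransGen.cases_head (hA.2.2.2.2 b hbU) with heq | ⟨c, hc, _⟩
      · exact absurd heq.symm hbr
      · exact ⟨(w, c), hc, rfl⟩
    · obtain ⟨e, he, he1⟩ := h w hw hwr
      exact ⟨e, he, he1⟩
  have hle : U.card ≤ A.card := by
    apply Finset.card_le_card_of_injOn
      (fun w => if hw : ∃ e ∈ A, e.1 = w then hw.choose else (r, r))
    · intro w hw
      have hex := hall w hw
      simp only [dif_pos hex]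
      exact hex.choose_spec.1
    · intro w1 hw1 w2 hw2 heq
      have h1 := hall w1 (by simpa using hw1)
      have h2 := hall w2 (by simpa using hw2)
      simp only [dif_pos h1, dif_pos h2] at heq
      rw [← h1.choose_spec.2, ← h2.choose_spec.2, heq]
  have := arbor_card hA
  omega

lemma arbor_restrict {u v : V}
    (hA : IsArborOn U A r) (hvU : v ∈ U) (huU : u ∈ U) (huv : u ≠ v)
    (hat : ∀ e ∈ A, (e.1 = v ∨ e.2 = v) → e = (u, v) ∨ e = (v, u)) :
    IsArborOn (U.erase v) ((A.erase (u, v)).erase (v, u)) (if r = v then u else r) := by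
  have hmem : ∀ e : V × V, e ∈ (A.erase (u, v)).erase (v, u) ↔
      e ∈ A ∧ e ≠ (u, v) ∧ e ≠ (v, u) := by
    intro e; simp only [Finset.mem_erase]; tauto
  have hA'v : ∀ e ∈ (A.erase (u, v)).erase (v, u), e.1 ≠ v ∧ e.2 ≠ v := by
    intro e he
    obtain ⟨heA, h1, h2⟩ := (hmem e).mp he
    constructor
    · intro hev
      rcases hat e heA (Or.inl hev) with h | h <;> [exact h1 h; exact h2 h]
    · intro hev
      rcases hat e heA (Or.inr hev) with h | h <;> [exact h1 h; exact h2 h]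
  by_cases hrv : r = v
  · -- root is v; re-root at u
    have hvuA : (v, u) ∈ A := by
      rcases Relation.ReflTransGen.cases_head (hA.2.2.2.2 u huU) with heq | ⟨c, hc, _⟩
      · exact absurd (hrv.symm.trans heq).symm huv
      · have hc' : (v, c) ∈ A := by rw [← hrv]; exact hc
        rcases hat (v, c) hc' (Or.inl rfl) with h | h
        · exact absurd (congrArg Prod.fst h) (Ne.symm huv)
        · exact h ▸ hc'
    have hur : u ≠ r := fun h => huv (h.trans hrv)
    rw [if_pos hrv]
    refine ⟨Finset.mem_erase.mpr ⟨huv, huU⟩, ?_, ?_, ?_, ?_⟩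
    · intro e he
      obtain ⟨heA, -, -⟩ := (hmem e).mp he
      exact ⟨Finset.mem_erase.mpr ⟨(hA'v e he).1, (hA.2.1 e heA).1⟩,
        Finset.mem_erase.mpr ⟨(hA'v e he).2, (hA.2.1 e heA).2⟩⟩
    · intro e he heu
      obtain ⟨heA, -, h2⟩ := (hmem e).mp he
      exact h2 (arbor_in_unique hA huU hur heA heu hvuA rfl)
    · intro w hw hwu
      have hwv : w ≠ v := Finset.ne_of_mem_erase hw
      have hwr : w ≠ r := fun h => hwv (h.trans hrv)
      have hfil : Finset.filter (fun e => e.2 = w) ((A.erase (u, v)).erase (v, u)) =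
          Finset.filter (fun e => e.2 = w) A := by
        ext e
        simp only [Finset.mem_filter, hmem]
        constructor
        · rintro ⟨⟨h1, -, -⟩, h2⟩; exact ⟨h1, h2⟩
        · rintro ⟨h1, h2⟩
          refine ⟨⟨h1, ?_, ?_⟩, h2⟩
          · rintro rfl; exact hwv h2.symm
          · rintro rfl; exact hwu h2.symm
      rw [hfil]
      exact hA.2.2.2.1 w (Finset.mem_of_mem_erase hw) hwr
    · intro w hw
      have hwv : w ≠ v := Finset.ne_of_mem_erase hw
      have key : ∀ x, Relation.ReflTransGen (fun a b => (a, b) ∈ A) r x → x ≠ v →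
          Relation.ReflTransGen
            (fun a b => (a, b) ∈ (A.erase (u, v)).erase (v, u)) u x := by
        intro x hx
        induction hx with
        | refl => intro hx; exact absurd hrv hx
        | @tail b y hb harc ih =>
          intro hyv
          by_cases hbv : b = v
          · subst hbv
            rcases hat (b, y) harc (Or.inl rfl) with h | h
            · exact absurd (congrArg Prod.fst h) (Ne.symm huv)
            · have h2 : y = u := congrArg Prod.snd h
              rw [h2]
          · refine Relation.ReflTransGen.tail (ih hbv) ?_
            refine (hmem (b, y)).mpr ⟨harc, ?_, ?_⟩
            · rintro h; exact hyv (congrArg Prod.snd h)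
            · rintro h; exact hbv (congrArg Prod.fst h)
      exact key w (hA.2.2.2.2 w (Finset.mem_of_mem_erase hw)) hwv
  · -- root is not v
    have hvr : v ≠ r := fun h => hrv h.symm
    obtain ⟨x, hx0⟩ := Finset.card_eq_one.mp (hA.2.2.2.1 v hvU hvr)
    have hxA : x ∈ A ∧ x.2 = v := by
      have hxx : x ∈ A.filter (fun e => e.2 = v) := hx0 ▸ Finset.mem_singleton_self x
      exact Finset.mem_filter.mp hxx
    have huvA : (u, v) ∈ A := by
      rcases hat x hxA.1 (Or.inr hxA.2) with h | h
      · rw [← h]; exact hxA.1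
      · exfalso; rw [h] at hxA; exact huv hxA.2
    have hvuA : (v, u) ∉ A := fun h => arbor_not_both hA huvA h
    rw [if_neg hrv]
    refine ⟨Finset.mem_erase.mpr ⟨fun h => hrv h, hA.1⟩, ?_, ?_, ?_, ?_⟩
    · intro e he
      obtain ⟨heA, -, -⟩ := (hmem e).mp he
      exact ⟨Finset.mem_erase.mpr ⟨(hA'v e he).1, (hA.2.1 e heA).1⟩,
        Finset.mem_erase.mpr ⟨(hA'v e he).2, (hA.2.1 e heA).2⟩⟩
    · intro e he
      exact hA.2.2.1 e ((hmem e).mp he).1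
    · intro w hw hwr
      have hwv : w ≠ v := Finset.ne_of_mem_erase hw
      have hfil : Finset.filter (fun e => e.2 = w) ((A.erase (u, v)).erase (v, u)) =
          Finset.filter (fun e => e.2 = w) A := by
        ext e
        simp only [Finset.mem_filter, hmem]
        constructor
        · rintro ⟨⟨h1, -, -⟩, h2⟩; exact ⟨h1, h2⟩
        · rintro ⟨h1, h2⟩
          refine ⟨⟨h1, ?_, ?_⟩, h2⟩
          · rintro rfl; exact hwv h2.symm
          · rintro rfl; exact hvuA h1
      rw [hfil]
      exact hA.2.2.2.1 w (Finset.mem_of_mem_erase hw) hwr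
    · intro w hw
      have hwv : w ≠ v := Finset.ne_of_mem_erase hw
      have key : ∀ x, Relation.ReflTransGen (fun a b => (a, b) ∈ A) r x → x ≠ v →
          Relation.ReflTransGen
            (fun a b => (a, b) ∈ (A.erase (u, v)).erase (v, u)) r x := by
        intro x hx
        induction hx with
        | refl => intro _; exact Relation.ReflTransGen.refl
        | @tail b y hb harc ih =>
          intro hyv
          have hbv : b ≠ v := by
            rintro rfl
            rcases hat (b, y) harc (Or.inl rfl) with h | h
            · exact huv (congrArg Prod.fst h).symm
            · have h2 : y = u := congrArg Prod.snd h
              rw [h2] at harc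
              exact hvuA harc
          refine Relation.ReflTransGen.tail (ih hbv) ?_
          refine (hmem (b, y)).mpr ⟨harc, ?_, ?_⟩
          · rintro h; exact hyv (congrArg Prod.snd h)
          · rintro h; exact hbv (congrArg Prod.fst h)
      exact key w (hA.2.2.2.2 w (Finset.mem_of_mem_erase hw)) hwv

end AuxLemmas

lemma aux_rainbow [DecidableEq V] (n : ℕ) :
    ∀ (U : Finset V) (L : List (Finset (V × V) × V)),
    U.card = n → L.length + 1 = U.card →
    (∀ p ∈ L, IsArborOn U p.1 p.2) →
    (∀ p ∈ L, ∀ q ∈ L, ∀ e : V × V, (e ∈ p.1 ∨ e.swap ∈ p.1) ↔ (e ∈ q.1 ∨ e.swap ∈ q.1)) →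
    ∃ B ρ, IsArborOn U B ρ ∧
      ∃ c : V × V → ℕ, Set.InjOn c ↑B ∧
        ∀ e ∈ B, ∃ h : c e < L.length, e ∈ (L.get ⟨c e, h⟩).1 := by
  induction n using Nat.strong_induction_on with
  | _ n ih =>
  intro U L hUn hlen harb hedge
  rcases Nat.lt_or_ge n 2 with h2 | h2
  · -- base case : |U| = 1
    have hL0 : L.length = 0 := by omega
    have hU1 : U.card = 1 := by omega
    obtain ⟨x, rfl⟩ := Finset.card_eq_one.mp hU1
    refine ⟨∅, x, ⟨Finset.mem_singleton_self x, ?_, ?_, ?_, ?_⟩, fun _ => 0, ?_, ?_⟩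
    · intro e he; exact absurd he (Finset.notMem_empty e)
    · intro e he; exact absurd he (Finset.notMem_empty e)
    · intro w hw hwx; exact absurd (Finset.mem_singleton.mp hw) hwx
    · intro w hw; rw [Finset.mem_singleton.mp hw]
    · simp [Set.InjOn]
    · intro e he; exact absurd he (Finset.notMem_empty e)
  · -- inductive step
    have hL : 0 < L.length := by omega
    set p0 := L.get ⟨0, hL⟩ with hp0def
    have hp0 : p0 ∈ L := L.get_mem _
    have h0 := harb p0 hp0
    obtain ⟨v, hvU, hvr, hleaf⟩ := arbor_leaf h0 (by omega)
    obtain ⟨x, hx0⟩ := Finset.card_eq_one.mp (h0.2.2.2.1 v hvU hvr)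
    have hxA : x ∈ p0.1 ∧ x.2 = v := by
      have hxx : x ∈ p0.1.filter (fun e => e.2 = v) := hx0 ▸ Finset.mem_singleton_self x
      exact Finset.mem_filter.mp hxx
    obtain ⟨u, rfl⟩ : ∃ u, x = (u, v) := ⟨x.1, by rw [← hxA.2]⟩
    have hx : (u, v) ∈ p0.1 := hxA.1
    have huU : u ∈ U := (h0.2.1 _ hx).1
    have huv : u ≠ v := by
      rintro rfl
      exact arbor_not_both h0 hx hx
    have hat0 : ∀ e ∈ p0.1, (e.1 = v ∨ e.2 = v) → e = (u, v) := by
      rintro e he (h1 | h1)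
      · exact absurd h1 (hleaf e he)
      · exact arbor_in_unique h0 hvU hvr he h1 hx rfl
    have hatq : ∀ q ∈ L, ∀ e ∈ q.1, (e.1 = v ∨ e.2 = v) → e = (u, v) ∨ e = (v, u) := by
      intro q hq e he hev
      rcases (hedge q hq p0 hp0 e).mp (Or.inl he) with h | h
      · exact Or.inl (hat0 e h hev)
      · right
        have hsw : e.swap = (u, v) := by
          apply hat0 _ h
          rcases hev with h1 | h1
          · exact Or.inr h1
          · exact Or.inl h1
        rw [← Prod.swap_swap e, hsw]
        rfl
    have hs1 : ∀ e : V × V, e.swap = (u, v) → e = (v, u) := by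
      intro e h; rw [← Prod.swap_swap e, h]; rfl
    have hs2 : ∀ e : V × V, e.swap = (v, u) → e = (u, v) := by
      intro e h; rw [← Prod.swap_swap e, h]; rfl
    set restrict : Finset (V × V) × V → Finset (V × V) × V :=
      fun p => ((p.1.erase (u, v)).erase (v, u), if p.2 = v then u else p.2) with hresdef
    set L' := L.tail.map restrict with hL'def
    have hlen' : L'.length = L.length - 1 := by
      simp [hL'def, List.length_tail]
    have hcard' : (U.erase v).card = n - 1 := by
      rw [Finset.card_erase_of_mem hvU, hUn]
    have harb' : ∀ p' ∈ L', IsArborOn (U.erase v) p'.1 p'.2 := by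
      intro p' hp'
      obtain ⟨q, hq, rfl⟩ := List.mem_map.mp hp'
      have hqL : q ∈ L := List.mem_of_mem_tail hq
      exact arbor_restrict (harb q hqL) hvU huU huv (hatq q hqL)
    have hmm : ∀ q : Finset (V × V) × V, ∀ e : V × V,
        ((e ∈ (restrict q).1 ∨ e.swap ∈ (restrict q).1) ↔
          ((e ∈ q.1 ∨ e.swap ∈ q.1) ∧ e ≠ (u, v) ∧ e ≠ (v, u))) := by
      intro q e
      simp only [hresdef, Finset.mem_erase]
      constructor
      · rintro (⟨h1, h2, h3⟩ | ⟨h1, h2, h3⟩)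
        · exact ⟨Or.inl h3, h2, h1⟩
        · exact ⟨Or.inr h3, fun hh => h1 (by rw [hh, Prod.swap_prod_mk]), fun hh => h2 (by rw [hh, Prod.swap_prod_mk])⟩
      · rintro ⟨(h3 | h3), h1, h2⟩
        · exact Or.inl ⟨h2, h1, h3⟩
        · exact Or.inr ⟨fun hh => h1 (hs2 e hh), fun hh => h2 (hs1 e hh), h3⟩
    have hedge' : ∀ p' ∈ L', ∀ q' ∈ L', ∀ e : V × V,
        (e ∈ p'.1 ∨ e.swap ∈ p'.1) ↔ (e ∈ q'.1 ∨ e.swap ∈ q'.1) := by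
      intro p' hp' q' hq' e
      obtain ⟨p, hp, rfl⟩ := List.mem_map.mp hp'
      obtain ⟨q, hq, rfl⟩ := List.mem_map.mp hq'
      rw [hmm p e, hmm q e, hedge p (List.mem_of_mem_tail hp) q (List.mem_of_mem_tail hq) e]
    obtain ⟨B', r'', hB', c, hcinj, hcmem⟩ :=
      ih (n - 1) (by omega) (U.erase v) L' hcard' (by omega) harb' hedge'
    have hB'nv : ∀ e ∈ B', e.1 ≠ v ∧ e.2 ≠ v := by
      intro e he
      exact ⟨Finset.ne_of_mem_erase (hB'.2.1 e he).1, Finset.ne_of_mem_erase (hB'.2.1 e he).2⟩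
    have hnotin : (u, v) ∉ B' := fun h => (hB'nv _ h).2 rfl
    have hr''v : r'' ≠ v := Finset.ne_of_mem_erase hB'.1
    have hr''U : r'' ∈ U := Finset.mem_of_mem_erase hB'.1
    refine ⟨insert (u, v) B', r'', ⟨hr''U, ?_, ?_, ?_, ?_⟩, ?_⟩
    · intro e he
      rcases Finset.mem_insert.mp he with rfl | he'
      · exact ⟨huU, hvU⟩
      · exact ⟨Finset.mem_of_mem_erase (hB'.2.1 e he').1,
          Finset.mem_of_mem_erase (hB'.2.1 e he').2⟩
    · intro e he
      rcases Finset.mem_insert.mp he with rfl | he'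
      · exact Ne.symm hr''v
      · exact hB'.2.2.1 e he'
    · intro w hw hwr
      by_cases hwv : w = v
      · have hfil : (insert (u, v) B').filter (fun e => e.2 = w) = {(u, v)} := by
          ext a
          simp only [Finset.mem_filter, Finset.mem_insert, Finset.mem_singleton]
          constructor
          · rintro ⟨rfl | ha, hh2⟩
            · rfl
            · exact absurd (hh2.trans hwv) ((hB'nv a ha).2)
          · rintro rfl; exact ⟨Or.inl rfl, hwv.symm⟩
        rw [hfil, Finset.card_singleton]
      · have hfil : (insert (u, v) B').filter (fun e => e.2 = w) =
            B'.filter (fun e => e.2 = w) := by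
          ext a
          simp only [Finset.mem_filter, Finset.mem_insert]
          constructor
          · rintro ⟨rfl | ha, hh2⟩
            · exact absurd hh2.symm hwv
            · exact ⟨ha, hh2⟩
          · rintro ⟨ha, hh2⟩; exact ⟨Or.inr ha, hh2⟩
        rw [hfil]
        exact hB'.2.2.2.1 w (Finset.mem_erase.mpr ⟨hwv, hw⟩) hwr
    · intro w hw
      by_cases hwv : w = v
      · subst hwv
        have hu' : Relation.ReflTransGen (fun a b => (a, b) ∈ B') r'' u :=
          hB'.2.2.2.2 u (Finset.mem_erase.mpr ⟨huv, huU⟩)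
        refine Relation.ReflTransGen.tail
          (Relation.ReflTransGen.mono (fun a b h => Finset.mem_insert_of_mem h) _ _ hu') ?_
        exact Finset.mem_insert_self _ _
      · exact Relation.ReflTransGen.mono
          (fun a b h => Finset.mem_insert_of_mem h) _ _ (hB'.2.2.2.2 w (Finset.mem_erase.mpr ⟨hwv, hw⟩))
    · -- rainbow coloring
      refine ⟨fun e => if e = (u, v) then 0 else c e + 1, ?_, ?_⟩
      · intro e1 he1 e2 he2 heq
        simp only [Finset.coe_insert, Set.mem_insert_iff, Finset.mem_coe] at he1 he2
        have heq' : (if e1 = (u, v) then 0 else c e1 + 1) =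
            (if e2 = (u, v) then 0 else c e2 + 1) := heq
        by_cases h1 : e1 = (u, v) <;> by_cases hh2 : e2 = (u, v)
        · rw [h1, hh2]
        · rw [if_pos h1, if_neg hh2] at heq'; omega
        · rw [if_neg h1, if_pos hh2] at heq'; omega
        · rw [if_neg h1, if_neg hh2] at heq'
          have he1' : e1 ∈ B' := he1.resolve_left h1
          have he2' : e2 ∈ B' := he2.resolve_left hh2
          exact hcinj (Finset.mem_coe.mpr he1') (Finset.mem_coe.mpr he2') (by omega)
      · intro e he
        by_cases h1 : e = (u, v)
        · have hc0 : (if e = (u, v) then 0 else c e + 1) = 0 := if_pos h1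
          have hb : (if e = (u, v) then 0 else c e + 1) < L.length := by omega
          have hkey : L.get ⟨if e = (u, v) then 0 else c e + 1, hb⟩ = p0 := by
            rw [hp0def]; congr 1; exact Fin.ext hc0
          refine ⟨hb, ?_⟩
          show e ∈ (L.get ⟨if e = (u, v) then 0 else c e + 1, hb⟩).1
          rw [hkey, h1]; exact hx
        · have he' : e ∈ B' := (Finset.mem_insert.mp he).resolve_left h1
          obtain ⟨hlt, hmem2⟩ := hcmem e he'
          have hlt2 : c e + 1 < L.length := by omega
          have hc0 : (if e = (u, v) then 0 else c e + 1) = c e + 1 := if_neg h1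
          have hb : (if e = (u, v) then 0 else c e + 1) < L.length := by omega
          have hkey : L.get ⟨if e = (u, v) then 0 else c e + 1, hb⟩ =
              L.get ⟨c e + 1, hlt2⟩ := by
            congr 1; exact Fin.ext hc0
          have h1' : L'.get ⟨c e, hlt⟩ = restrict (L.get ⟨c e + 1, hlt2⟩) := by
            show (L.tail.map restrict).get ⟨c e, hlt⟩ = _
            simp only [List.get_eq_getElem, List.getElem_map, List.getElem_tail]
          have hmem3 : e ∈ (L.get ⟨c e + 1, hlt2⟩).1 := by
            rw [h1'] at hmem2
            exact Finset.mem_of_mem_erase (Finset.mem_of_mem_erase hmem2)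
          refine ⟨hb, ?_⟩
          show e ∈ (L.get ⟨if e = (u, v) then 0 else c e + 1, hb⟩).1
          rw [hkey]; exact hmem3

theorem stmt10 [Fintype V] [DecidableEq V] (hn : 2 ≤ Fintype.card V)
    (T : SimpleGraph V) (hT : T.IsTree)
    (A : Fin (Fintype.card V - 1) → Finset (V × V)) (r : Fin (Fintype.card V - 1) → V)
    (hA : ∀ i, IsSpanningArbor (A i) (r i))
    (hor : ∀ i, ∀ u v : V, T.Adj u v ↔ ((u, v) ∈ A i ∨ (v, u) ∈ A i)) :
    ∃ (B : Finset (V × V)) (r' : V), IsSpanningArbor B r' ∧ IsRainbowOf A B := by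
  classical
  set L : List (Finset (V × V) × V) :=
    List.ofFn (fun i : Fin (Fintype.card V - 1) => (A i, r i)) with hLdef
  have hLlen : L.length = Fintype.card V - 1 := by simp [hLdef]
  have hcardU : (Finset.univ : Finset V).card = Fintype.card V := Finset.card_univ
  have hmemL : ∀ p ∈ L, ∃ i, p = (A i, r i) := by
    intro p hp
    rw [hLdef, List.mem_ofFn] at hp
    obtain ⟨i, hi⟩ := hp
    exact ⟨i, hi.symm⟩
  have harb : ∀ p ∈ L, IsArborOn (Finset.univ : Finset V) p.1 p.2 := by
    intro p hp
    obtain ⟨i, rfl⟩ := hmemL p hp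
    exact hA i
  have hedge : ∀ p ∈ L, ∀ q ∈ L, ∀ e : V × V,
      (e ∈ p.1 ∨ e.swap ∈ p.1) ↔ (e ∈ q.1 ∨ e.swap ∈ q.1) := by
    intro p hp q hq e
    obtain ⟨i, rfl⟩ := hmemL p hp
    obtain ⟨j, rfl⟩ := hmemL q hq
    have hi := hor i e.1 e.2
    have hj := hor j e.1 e.2
    rw [show ((e.1, e.2) : V × V) = e from rfl] at hi hj
    rw [show (e.2, e.1) = e.swap from rfl] at hi hj
    simp only
    rw [← hi, ← hj]
  obtain ⟨B, ρ, hB, c, hcinj, hcmem⟩ :=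
    aux_rainbow (Fintype.card V) (Finset.univ : Finset V) L
      hcardU (by omega) harb hedge
  have hkpos : 0 < Fintype.card V - 1 := by omega
  refine ⟨B, ρ, hB,
    fun e => if h : c e < Fintype.card V - 1 then ⟨c e, h⟩ else ⟨0, hkpos⟩, ?_, ?_⟩
  · intro e1 he1 e2 he2 heq
    obtain ⟨h1, -⟩ := hcmem e1 (Finset.mem_coe.mp he1)
    obtain ⟨h2, -⟩ := hcmem e2 (Finset.mem_coe.mp he2)
    rw [hLlen] at h1 h2
    have heq' : (if h : c e1 < Fintype.card V - 1 then (⟨c e1, h⟩ : Fin _) else ⟨0, hkpos⟩)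
        = (if h : c e2 < Fintype.card V - 1 then (⟨c e2, h⟩ : Fin _) else ⟨0, hkpos⟩) := heq
    rw [dif_pos h1, dif_pos h2] at heq'
    have : c e1 = c e2 := congrArg Fin.val heq'
    exact hcinj he1 he2 this
  · intro e he
    obtain ⟨h1, hmem⟩ := hcmem e he
    have h1' : c e < Fintype.card V - 1 := by rw [hLlen] at h1; exact h1
    have hget : L.get ⟨c e, h1⟩ = (A ⟨c e, h1'⟩, r ⟨c e, h1'⟩) := by
      show (List.ofFn (fun i : Fin (Fintype.card V - 1) => (A i, r i))).get ⟨c e, h1⟩ = _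
      simp only [List.get_eq_getElem, List.getElem_ofFn]
    rw [hget] at hmem
    show e ∈ A (if h : c e < Fintype.card V - 1 then ⟨c e, h⟩ else ⟨0, hkpos⟩)
    rw [dif_pos h1']
    exact hmem
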